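/- Let T₁, T₂ be nilpotent endomorphisms of finite-dimensional vector spaces V₁, V₂ and T = T₁⊗id + id⊗T₂. Suppose W₁ ⊆ V₁ is a subspace with W₁ ∩ (ker T₁ + im T₁) = {0}. Then for any subspace S₂ ⊆ V₂ with T₂ injective on S₂, the restriction of T to W₁ ⊗ S₂ is injective and T(W₁ ⊗ S₂) ∩ (ker(T₁)⊗im(T₂) + im(T₁)⊗ker(T₂)) = {0}. -/

import Mathlib

/-- The image of the canonical map `p ⊗ q → V₁ ⊗ V₂` for submodules `p ⊆ V₁`, `q ⊆ V₂`. -/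
noncomputable def tensorSub {K V₁ V₂ : Type*} [Field K] [AddCommGroup V₁] [Module K V₁]
    [AddCommGroup V₂] [Module K V₂] (p : Submodule K V₁) (q : Submodule K V₂) :
    Submodule K (TensorProduct K V₁ V₂) :=
  LinearMap.range (TensorProduct.map p.subtype q.subtype)

section aux

variable {K V₁ V₂ : Type*} [Field K] [AddCommGroup V₁] [Module K V₁]
  [AddCommGroup V₂] [Module K V₂]

lemma tensorSub_mono {p p' : Submodule K V₁} {q q' : Submodule K V₂}
    (hp : p ≤ p') (hq : q ≤ q') : tensorSub p q ≤ tensorSub p' q' := by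
  rintro x ⟨y, rfl⟩
  refine ⟨TensorProduct.map (Submodule.inclusion hp) (Submodule.inclusion hq) y, ?_⟩
  rw [← LinearMap.comp_apply, ← TensorProduct.map_comp]
  rfl

lemma rTensor_mem_tensorSub (f : V₁ →ₗ[K] V₁) {p : Submodule K V₁} {q : Submodule K V₂}
    {x : TensorProduct K V₁ V₂} (hx : x ∈ tensorSub p q) :
    LinearMap.rTensor V₂ f x ∈ tensorSub (LinearMap.range f) q := by
  obtain ⟨y, rfl⟩ := hx
  rw [← LinearMap.comp_apply, LinearMap.rTensor_comp_map]
  refine ⟨TensorProduct.map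
    ((f ∘ₗ p.subtype).codRestrict (LinearMap.range f) (fun c => ⟨p.subtype c, rfl⟩))
    LinearMap.id y, ?_⟩
  rw [← LinearMap.comp_apply, ← TensorProduct.map_comp]
  rfl

lemma lTensor_mem_tensorSub (g : V₂ →ₗ[K] V₂) {p : Submodule K V₁} {q : Submodule K V₂}
    {x : TensorProduct K V₁ V₂} (hx : x ∈ tensorSub p q) :
    LinearMap.lTensor V₁ g x ∈ tensorSub p (LinearMap.range g) := by
  obtain ⟨y, rfl⟩ := hx
  rw [← LinearMap.comp_apply, LinearMap.lTensor_comp_map]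
  refine ⟨TensorProduct.map LinearMap.id
    ((g ∘ₗ q.subtype).codRestrict (LinearMap.range g) (fun c => ⟨q.subtype c, rfl⟩)) y, ?_⟩
  rw [← LinearMap.comp_apply, ← TensorProduct.map_comp]
  rfl

/-- If `A ⊓ B = ⊥` in a f.d. vector space, then `A ⊗ V₂` and `B ⊗ V₂` are disjoint. -/
lemma tensorSub_disjoint [FiniteDimensional K V₁] {A B : Submodule K V₁}
    (hAB : A ⊓ B = ⊥) : tensorSub A (⊤ : Submodule K V₂) ⊓ tensorSub B ⊤ = ⊥ := by
  -- find a projection fixing A and killing B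
  obtain ⟨C, hC⟩ := Submodule.exists_isCompl (A ⊔ B)
  have hdisj : Disjoint A (B ⊔ C) :=
    (disjoint_iff.mpr hAB).disjoint_sup_right_of_disjoint_sup_left hC.disjoint
  have hcompl : IsCompl A (B ⊔ C) := by
    refine ⟨hdisj, codisjoint_iff.mpr ?_⟩
    rw [← sup_assoc]
    exact codisjoint_iff.mp hC.codisjoint
  set π : V₁ →ₗ[K] V₁ := A.subtype ∘ₗ (A.projectionOnto _ hcompl)
  have hπA : ∀ a ∈ A, π a = a := fun a ha => by
    simp [π, Submodule.projectionOnto_apply_of_mem_left hcompl ha]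
  have hπB : ∀ b ∈ B, π b = 0 := fun b hb => by
    simp [π, Submodule.projectionOnto_apply_of_mem_right hcompl (le_sup_left (a := B) hb)]
  rw [eq_bot_iff]
  rintro x ⟨hxA, hxB⟩
  have hfix : LinearMap.rTensor V₂ π x = x := by
    obtain ⟨y, rfl⟩ := hxA
    rw [← LinearMap.comp_apply, LinearMap.rTensor_comp_map]
    have : π ∘ₗ A.subtype = A.subtype := by
      ext a; exact hπA a a.2
    rw [this]
  have hkill : LinearMap.rTensor V₂ π x = 0 := by
    obtain ⟨y, rfl⟩ := hxB
    rw [← LinearMap.comp_apply, LinearMap.rTensor_comp_map]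
    have : π ∘ₗ B.subtype = 0 := by
      ext b; exact hπB b b.2
    rw [this, TensorProduct.map_zero_left, LinearMap.zero_apply]
  rw [Submodule.mem_bot, ← hfix]
  exact hkill

end aux

/-- Abstract version of the step `U ∩ (f₁+f₂)(A₁⊗B₂) = 0`: for nilpotent `T₁`, `T₂` and
`T = T₁⊗id + id⊗T₂`, if `W₁ ⊓ (ker T₁ + im T₁) = 0` and `T₂` is injective on `S₂`, then `T`
is injective on `W₁ ⊗ S₂` and `T(W₁ ⊗ S₂) ∩ (ker T₁ ⊗ im T₂ + im T₁ ⊗ ker T₂) = 0`. -/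
theorem stmt_16 (V₁ V₂ : Type*) [AddCommGroup V₁] [Module ℂ V₁] [FiniteDimensional ℂ V₁]
    [AddCommGroup V₂] [Module ℂ V₂] [FiniteDimensional ℂ V₂]
    (T₁ : Module.End ℂ V₁) (T₂ : Module.End ℂ V₂)
    (h₁ : IsNilpotent T₁) (h₂ : IsNilpotent T₂)
    (T : Module.End ℂ (TensorProduct ℂ V₁ V₂))
    (hT : T = LinearMap.rTensor V₂ T₁ + LinearMap.lTensor V₁ T₂)
    (W₁ : Submodule ℂ V₁) (hW₁ : W₁ ⊓ (LinearMap.ker T₁ ⊔ LinearMap.range T₁) = ⊥)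
    (S₂ : Submodule ℂ V₂) (hS₂ : LinearMap.ker T₂ ⊓ S₂ = ⊥) :
    LinearMap.ker T ⊓ tensorSub W₁ S₂ = ⊥ ∧
    Submodule.map T (tensorSub W₁ S₂) ⊓
        (tensorSub (LinearMap.ker T₁) (LinearMap.range T₂) ⊔
          tensorSub (LinearMap.range T₁) (LinearMap.ker T₂)) = ⊥ := by
  -- `lTensor T₂` is injective on `tensorSub W₁ S₂`
  have hinj : ∀ x ∈ tensorSub W₁ S₂, LinearMap.lTensor V₁ T₂ x = 0 → x = 0 := by
    rintro x ⟨y, rfl⟩ hx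
    have hT₂inj : Function.Injective (T₂ ∘ₗ S₂.subtype) := by
      rw [← LinearMap.ker_eq_bot, LinearMap.ker_comp, eq_bot_iff]
      rintro s hs
      have : (s : V₂) ∈ LinearMap.ker T₂ ⊓ S₂ := ⟨hs, s.2⟩
      rw [hS₂] at this
      exact Subtype.ext_iff.mpr this
    have hmapinj : Function.Injective (TensorProduct.map W₁.subtype (T₂ ∘ₗ S₂.subtype)) := by
      rw [← LinearMap.rTensor_comp_lTensor]
      exact (Module.Flat.rTensor_preserves_injective_linearMap _ W₁.injective_subtype).comp
        (Module.Flat.lTensor_preserves_injective_linearMap _ hT₂inj)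
    have : TensorProduct.map W₁.subtype (T₂ ∘ₗ S₂.subtype) y = 0 := by
      rw [← LinearMap.lTensor_comp_map]
      exact hx
    have hy : y = 0 := hmapinj (by simpa using this)
    simp [hy]
  -- key step: if `lTensor T₂ x` lands in `(ker T₁ ⊔ range T₁) ⊗ V₂`, then `x = 0`
  have hkey : ∀ x ∈ tensorSub W₁ S₂,
      LinearMap.lTensor V₁ T₂ x ∈
        tensorSub (LinearMap.ker T₁ ⊔ LinearMap.range T₁) (⊤ : Submodule ℂ V₂) → x = 0 := by
    intro x hx hmem
    have h1 : LinearMap.lTensor V₁ T₂ x ∈ tensorSub W₁ (⊤ : Submodule ℂ V₂) :=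
      tensorSub_mono le_rfl le_top (lTensor_mem_tensorSub T₂ hx)
    have h0 : LinearMap.lTensor V₁ T₂ x = 0 := by
      have := tensorSub_disjoint (V₂ := V₂) hW₁
      have hx0 : LinearMap.lTensor V₁ T₂ x ∈
          tensorSub W₁ (⊤ : Submodule ℂ V₂) ⊓ tensorSub (LinearMap.ker T₁ ⊔ LinearMap.range T₁) ⊤ :=
        ⟨h1, hmem⟩
      rw [this] at hx0
      exact hx0
    exact hinj x hx h0
  constructor
  · rw [eq_bot_iff]
    rintro x ⟨hker, hx⟩
    have hker' : T x = 0 := hker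
    have : LinearMap.lTensor V₁ T₂ x = -(LinearMap.rTensor V₂ T₁ x) := by
      rw [hT] at hker'
      simp only [LinearMap.add_apply] at hker'
      exact eq_neg_of_add_eq_zero_right hker'
    have hmem : LinearMap.lTensor V₁ T₂ x ∈
        tensorSub (LinearMap.ker T₁ ⊔ LinearMap.range T₁) (⊤ : Submodule ℂ V₂) := by
      rw [this]
      exact Submodule.neg_mem _
        (tensorSub_mono le_sup_right le_top (rTensor_mem_tensorSub T₁ hx))
    simpa using hkey x hx hmem
  · rw [eq_bot_iff]
    rintro z ⟨⟨x, hx, rfl⟩, hz2⟩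
    have hsub : tensorSub (LinearMap.ker T₁) (LinearMap.range T₂) ⊔
        tensorSub (LinearMap.range T₁) (LinearMap.ker T₂) ≤
        tensorSub (LinearMap.ker T₁ ⊔ LinearMap.range T₁) (⊤ : Submodule ℂ V₂) :=
      sup_le (tensorSub_mono le_sup_left le_top) (tensorSub_mono le_sup_right le_top)
    have hmem : LinearMap.lTensor V₁ T₂ x ∈
        tensorSub (LinearMap.ker T₁ ⊔ LinearMap.range T₁) (⊤ : Submodule ℂ V₂) := by
      have hEq : LinearMap.lTensor V₁ T₂ x = T x - LinearMap.rTensor V₂ T₁ x := by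
        rw [hT]; simp
      rw [hEq]
      exact Submodule.sub_mem _ (hsub hz2)
        (tensorSub_mono le_sup_right le_top (rTensor_mem_tensorSub T₁ hx))
    have hx0 : x = 0 := hkey x hx hmem
    simp [hx0]
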